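/- For a context-free grammar G and a nonterminal X, the language L_G(X) of terminal strings derivable from X in G equals the image of L(def(X)) under the substitution that maps each terminal symbol a ∈ Σ to {a} and each pseudoterminal Y of def(X) to L_G(Y). -/

import Mathlib

/-!
Infrastructure for the strongly-connected-component decomposition of a
context-free grammar (Pereira & Wright): the graph `conn(G)`, the components
`comp(X)`, the defining subgrammars `def(X)` (with out-of-component
nonterminals treated as pseudoterminals), and language substitution.
-/

namespace LRApprox

open scoped Classical

universe uN uT

variable {T : Type uT}

/-- Context-free grammar with nonterminals in an arbitrary universe `uN`, as in the
older Mathlib (current Mathlib restricts `NT` to `Type`). -/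
structure ContextFreeGrammar.{uN', uT'} (T : Type uT') where
  /-- Type of nonterminals. -/
  NT : Type uN'
  /-- Initial nonterminal. -/
  initial : NT
  /-- Rewrite rules. -/
  rules : Finset (ContextFreeRule T NT)

/-- One step of context-free transformation. -/
def ContextFreeGrammar.Produces (g : ContextFreeGrammar.{uN} T) (u v : List (Symbol T g.NT)) :
    Prop :=
  ∃ r ∈ g.rules, r.Rewrites u v

/-- Any number of steps of context-free transformation. -/
abbrev ContextFreeGrammar.Derives (g : ContextFreeGrammar.{uN} T) :
    List (Symbol T g.NT) → List (Symbol T g.NT) → Prop :=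
  Relation.ReflTransGen g.Produces

/-- Derivable from the initial nonterminal. -/
def ContextFreeGrammar.Generates (g : ContextFreeGrammar.{uN} T) (s : List (Symbol T g.NT)) :
    Prop :=
  g.Derives [Symbol.nonterminal g.initial] s

/-- The language generated by the grammar. -/
def ContextFreeGrammar.language (g : ContextFreeGrammar.{uN} T) : Language T :=
  { w | g.Generates (List.map Symbol.terminal w) }

/-- A CFG is left-linear if every rule has the form `A → Bβ` or `A → β`
with `β` a string of terminals. -/
def LeftLinear (g : ContextFreeGrammar.{uN} T) : Prop :=
  ∀ r ∈ g.rules, (∃ β : List T, r.output = β.map Symbol.terminal) ∨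
    (∃ (B : g.NT) (β : List T), r.output = Symbol.nonterminal B :: β.map Symbol.terminal)

/-- A CFG is right-linear if every rule has the form `A → βB` or `A → β`
with `β` a string of terminals. -/
def RightLinear (g : ContextFreeGrammar.{uN} T) : Prop :=
  ∀ r ∈ g.rules, (∃ β : List T, r.output = β.map Symbol.terminal) ∨
    (∃ (B : g.NT) (β : List T), r.output = β.map Symbol.terminal ++ [Symbol.nonterminal B])

/-- The edge relation of the graph `conn(G)`: an arc from `X` to `Y` whenever
`Y` occurs in the right-hand side of a rule of `G` whose left-hand side is `X`. -/
def ConnStep (g : ContextFreeGrammar.{uN} T) (X Y : g.NT) : Prop :=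
  ∃ r ∈ g.rules, r.input = X ∧ Symbol.nonterminal Y ∈ r.output

/-- `X` and `Y` lie in the same strongly connected component of `conn(G)`. -/
def SameComp (g : ContextFreeGrammar.{uN} T) (X Y : g.NT) : Prop :=
  Relation.ReflTransGen (ConnStep g) X Y ∧ Relation.ReflTransGen (ConnStep g) Y X

/-- Conversion of a symbol of `G` into a symbol of the defining subgrammar
`def(X)`: nonterminals outside `comp(X)` become pseudoterminals. -/
noncomputable def convSym (g : ContextFreeGrammar.{uN} T) (X : g.NT) :
    Symbol T g.NT → Symbol (T ⊕ g.NT) {Y : g.NT // SameComp g X Y}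
  | .terminal t => .terminal (Sum.inl t)
  | .nonterminal Y =>
      if h : SameComp g X Y then .nonterminal ⟨Y, h⟩ else .terminal (Sum.inr Y)

/-- The defining subgrammar `def(X)`: start symbol `X`, nonterminals
`comp(X)`, terminals `Σ` plus the pseudoterminals, and the rules of `G` whose
left-hand side lies in `comp(X)`. -/
noncomputable def defSub (g : ContextFreeGrammar.{uN} T) (X : g.NT) :
    ContextFreeGrammar.{uN} (T ⊕ g.NT) where
  NT := {Y : g.NT // SameComp g X Y}
  initial := ⟨X, Relation.ReflTransGen.refl, Relation.ReflTransGen.refl⟩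
  rules :=
    (g.rules.toList.filterMap fun r =>
      if h : SameComp g X r.input then
        some ⟨⟨r.input, h⟩, r.output.map (convSym g X)⟩
      else none).toFinset

/-- `Y` is a pseudoterminal of `def(X)`: it is not in `comp(X)` but occurs in
the right-hand side of a rule whose left-hand side is in `comp(X)`. -/
def IsPseudo (g : ContextFreeGrammar.{uN} T) (X Y : g.NT) : Prop :=
  ¬ SameComp g X Y ∧
    ∃ r ∈ g.rules, SameComp g X r.input ∧ Symbol.nonterminal Y ∈ r.output

/-- `L_G(X)`: the terminal strings derivable from the nonterminal `X` in `G`. -/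
def langFrom (g : ContextFreeGrammar.{uN} T) (X : g.NT) : Language T :=
  {w : List T | g.Derives [Symbol.nonterminal X] (w.map Symbol.terminal)}

/-- Extension of a substitution `f` from symbols to strings:
`f(c₁…c_n) = f(c₁)⋯f(c_n)`, with `f(ε) = {ε}`. -/
def substStr {α : Type*} {β : Type*} (f : α → Language β) : List α → Language β
  | [] => 1
  | c :: u => f c * substStr f u

/-- Extension of a substitution to a language: `f(L) = ⋃_{u ∈ L} f(u)`. -/
def substLang {α : Type*} {β : Type*} (f : α → Language β) (L : Language α) :
    Language β :=
  ⋃ u ∈ L, substStr f u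

end LRApprox

open LRApprox

namespace LRApprox

variable {g : ContextFreeGrammar.{uN} T}

open ContextFreeGrammar

theorem ContextFreeGrammar.Produces.append_left {v w : List (Symbol T g.NT)}
    (h : g.Produces v w) (p : List (Symbol T g.NT)) : g.Produces (p ++ v) (p ++ w) := by
  obtain ⟨r, hr, hrw⟩ := h
  exact ⟨r, hr, hrw.append_left p⟩

theorem ContextFreeGrammar.Produces.append_right {v w : List (Symbol T g.NT)}
    (h : g.Produces v w) (p : List (Symbol T g.NT)) : g.Produces (v ++ p) (w ++ p) := by
  obtain ⟨r, hr, hrw⟩ := h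
  exact ⟨r, hr, hrw.append_right p⟩

theorem ContextFreeGrammar.Derives.append_left {v w : List (Symbol T g.NT)}
    (h : g.Derives v w) (p : List (Symbol T g.NT)) : g.Derives (p ++ v) (p ++ w) := by
  induction h with
  | refl => exact Relation.ReflTransGen.refl
  | tail _ hp ih => exact Relation.ReflTransGen.tail ih (hp.append_left p)

theorem ContextFreeGrammar.Derives.append_right {v w : List (Symbol T g.NT)}
    (h : g.Derives v w) (p : List (Symbol T g.NT)) : g.Derives (v ++ p) (w ++ p) := by
  induction h with
  | refl => exact Relation.ReflTransGen.refl
  | tail _ hp ih => exact Relation.ReflTransGen.tail ih (hp.append_right p)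

theorem ContextFreeGrammar.Produces.trans_derives {u v w : List (Symbol T g.NT)}
    (h : g.Produces u v) (h' : g.Derives v w) : g.Derives u w :=
  Relation.ReflTransGen.head h h'

theorem ContextFreeGrammar.Derives.trans {u v w : List (Symbol T g.NT)}
    (h : g.Derives u v) (h' : g.Derives v w) : g.Derives u w :=
  Relation.ReflTransGen.trans h h'

/-- `n`-step derivations. -/
inductive DerivesIn (g : ContextFreeGrammar.{uN} T) :
    List (Symbol T g.NT) → List (Symbol T g.NT) → ℕ → Prop
  | refl (w : List (Symbol T g.NT)) : DerivesIn g w w 0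
  | head {u v w : List (Symbol T g.NT)} {n : ℕ} :
      g.Produces u v → DerivesIn g v w n → DerivesIn g u w (n + 1)

lemma derivesIn_of_derives {u v : List (Symbol T g.NT)} (h : g.Derives u v) :
    ∃ n, DerivesIn g u v n := by
  induction h using Relation.ReflTransGen.head_induction_on with
  | refl => exact ⟨0, .refl v⟩
  | head hp _ ih => obtain ⟨n, hn⟩ := ih; exact ⟨n + 1, .head hp hn⟩

lemma DerivesIn.zero_eq {u v : List (Symbol T g.NT)} (h : DerivesIn g u v 0) : u = v := by
  cases h; rfl

lemma DerivesIn.head_cases {u w : List (Symbol T g.NT)} {n : ℕ}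
    (h : DerivesIn g u w (n + 1)) : ∃ v, g.Produces u v ∧ DerivesIn g v w n := by
  cases h with
  | head hp hd => exact ⟨_, hp, hd⟩

lemma DerivesIn.derives {u v : List (Symbol T g.NT)} {n : ℕ} (h : DerivesIn g u v n) :
    g.Derives u v := by
  induction h with
  | refl => exact Relation.ReflTransGen.refl
  | head hp _ ih => exact hp.trans_derives ih

lemma rewrites_append_split {N : Type uN} {r : ContextFreeRule T N}
    {α β v : List (Symbol T N)} (h : r.Rewrites (α ++ β) v) :
    (∃ α', r.Rewrites α α' ∧ v = α' ++ β) ∨ (∃ β', r.Rewrites β β' ∧ v = α ++ β') := by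
  obtain ⟨p, q, he, rfl⟩ := h.exists_parts
  rw [List.append_assoc] at he
  rcases List.append_eq_append_iff.mp he with ⟨a', rfl, ha⟩ | ⟨c', rfl, hc⟩
  · -- p = α ++ a', β = a' ++ ([nt] ++ q)
    right
    refine ⟨a' ++ r.output ++ q, ?_, by simp⟩
    rw [ha, ← List.append_assoc]
    exact r.rewrites_of_exists_parts a' q
  · -- α = p ++ c', [nt] ++ q = c' ++ β
    rcases c' with _ | ⟨x, c''⟩
    · right
      simp only [List.nil_append, List.singleton_append] at hc
      refine ⟨r.output ++ q, ?_, by simp⟩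
      rw [← hc]
      exact ContextFreeRule.Rewrites.head q
    · left
      simp only [List.cons_append, List.singleton_append] at hc
      injection hc with h1 h2
      subst h1
      subst h2
      refine ⟨p ++ r.output ++ c'', ?_, by simp⟩
      simpa using r.rewrites_of_exists_parts p c''

lemma DerivesIn.append_split :
    ∀ {n : ℕ} {α β w : List (Symbol T g.NT)}, DerivesIn g (α ++ β) w n →
      ∃ w₁ w₂ n₁ n₂, w = w₁ ++ w₂ ∧ DerivesIn g α w₁ n₁ ∧ DerivesIn g β w₂ n₂ ∧ n₁ + n₂ = n := by
  intro n
  induction n with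
  | zero =>
    intro α β w h
    cases h
    exact ⟨α, β, 0, 0, rfl, .refl α, .refl β, rfl⟩
  | succ n ih =>
    intro α β w h
    cases h with
    | head hp hd =>
      obtain ⟨r, hr, hrw⟩ := hp
      rcases rewrites_append_split hrw with ⟨α', hα, rfl⟩ | ⟨β', hβ, rfl⟩
      · obtain ⟨w₁, w₂, n₁, n₂, rfl, h1, h2, rfl⟩ := ih hd
        exact ⟨w₁, w₂, n₁ + 1, n₂, rfl, .head ⟨r, hr, hα⟩ h1, h2, by omega⟩
      · obtain ⟨w₁, w₂, n₁, n₂, rfl, h1, h2, rfl⟩ := ih hd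
        exact ⟨w₁, w₂, n₁, n₂ + 1, rfl, h1, .head ⟨r, hr, hβ⟩ h2, by omega⟩

lemma no_produces_terminals {β : List T} {v : List (Symbol T g.NT)}
    (h : g.Produces (β.map Symbol.terminal) v) : False := by
  obtain ⟨r, _, hrw⟩ := h
  obtain ⟨p, q, he, _⟩ := hrw.exists_parts
  have : Symbol.nonterminal r.input ∈ β.map Symbol.terminal := by
    rw [he]; simp
  simp at this

lemma DerivesIn.terminals_eq {β : List T} {w : List (Symbol T g.NT)} {n : ℕ}
    (h : DerivesIn g (β.map Symbol.terminal) w n) : w = β.map Symbol.terminal := by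
  cases h with
  | refl => rfl
  | head hp _ => exact absurd hp no_produces_terminals

lemma produces_single_nt {Z : g.NT} {v : List (Symbol T g.NT)}
    (h : g.Produces [Symbol.nonterminal Z] v) :
    ∃ r ∈ g.rules, r.input = Z ∧ v = r.output := by
  obtain ⟨r, hr, hrw⟩ := h
  obtain ⟨p, q, hpq, rfl⟩ := hrw.exists_parts
  rcases p with _ | ⟨a, p⟩
  · simp only [List.nil_append] at hpq ⊢
    rcases q with _ | ⟨b, q⟩
    · simp only [List.append_nil] at hpq ⊢
      exact ⟨r, hr, by injection hpq.symm with h1; injection h1, by simp⟩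
    · exfalso
      have := congrArg List.length hpq
      simp at this
  · exfalso
    have := congrArg List.length hpq
    simp at this

/-- The back-conversion, mapping symbols of `def(X)` to symbols of `G`. -/
def backSym (g : ContextFreeGrammar.{uN} T) (X : g.NT) :
    Symbol (T ⊕ g.NT) {Y : g.NT // SameComp g X Y} → Symbol T g.NT
  | .terminal (Sum.inl t) => .terminal t
  | .terminal (Sum.inr Y) => .nonterminal Y
  | .nonterminal Y => .nonterminal Y.1

lemma backSym_convSym (X : g.NT) (s : Symbol T g.NT) : backSym g X (convSym g X s) = s := by
  cases s with
  | terminal t => rfl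
  | nonterminal Y => by_cases h : SameComp g X Y <;> simp [convSym, backSym, h]

open scoped Classical in
lemma mem_defSub_rules {X : g.NT}
    {r' : ContextFreeRule (T ⊕ g.NT) {Y : g.NT // SameComp g X Y}} :
    r' ∈ (defSub g X).rules ↔ ∃ r ∈ g.rules, ∃ h : SameComp g X r.input,
      r' = ⟨⟨r.input, h⟩, r.output.map (convSym g X)⟩ := by
  constructor
  · intro hr'
    have hr'' := List.mem_filterMap.mp (List.mem_toFinset.mp hr')
    obtain ⟨r, hr, he⟩ := hr''
    by_cases h : SameComp g X r.input
    · rw [dif_pos h] at he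
      exact ⟨r, Finset.mem_toList.mp hr, h, (Option.some.inj he).symm⟩
    · rw [dif_neg h] at he; cases he
  · rintro ⟨r, hr, h, rfl⟩
    exact List.mem_toFinset.mpr
      (List.mem_filterMap.mpr ⟨r, Finset.mem_toList.mpr hr, by rw [dif_pos h]⟩)

lemma defSub_derives_back {X : g.NT}
    {α β : List (Symbol (T ⊕ g.NT) {Y : g.NT // SameComp g X Y})}
    (h : (defSub g X).Derives α β) :
    g.Derives (α.map (backSym g X)) (β.map (backSym g X)) := by
  induction h with
  | refl => exact Relation.ReflTransGen.refl
  | tail _ hp ih =>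
    obtain ⟨r', hr', hrw⟩ := hp
    obtain ⟨r, hr, hc, rfl⟩ := mem_defSub_rules.mp hr'
    obtain ⟨p, q, rfl, rfl⟩ := hrw.exists_parts
    refine ih.trans (Relation.ReflTransGen.single ⟨r, hr, ?_⟩)
    have h2 : List.map (backSym g X) (List.map (convSym g X) r.output) = r.output := by
      rw [List.map_map]
      simp [Function.comp_def, backSym_convSym]
    have h1 : List.map (backSym g X)
        [Symbol.nonterminal (⟨r.input, hc⟩ : {Y : g.NT // SameComp g X Y})]
        = [Symbol.nonterminal r.input] := rfl
    have key : ∀ p' q' : List (Symbol (T ⊕ g.NT) {Y : g.NT // SameComp g X Y}),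
        r.Rewrites (List.map (backSym g X) (p' ++ [Symbol.nonterminal ⟨r.input, hc⟩] ++ q'))
          (List.map (backSym g X) (p' ++ List.map (convSym g X) r.output ++ q')) := by
      intro p' q'
      simp only [List.map_append]
      rw [h1, h2]
      exact r.rewrites_of_exists_parts _ _
    exact key p q

/-- The substitution of the statement. -/
abbrev fσ (g : ContextFreeGrammar.{uN} T) : T ⊕ g.NT → Language T :=
  Sum.elim (fun a : T => ({[a]} : Language T)) (langFrom g)

lemma substStr_append (f : T ⊕ g.NT → Language T) (u₁ u₂ : List (T ⊕ g.NT)) :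
    substStr f (u₁ ++ u₂) = substStr f u₁ * substStr f u₂ := by
  induction u₁ with
  | nil => simp [substStr]
  | cons c u ih => simp [substStr, ih, mul_assoc]

lemma substStr_singleton (f : T ⊕ g.NT → Language T) (c : T ⊕ g.NT) :
    substStr f [c] = f c := by
  simp [substStr]

lemma derives_of_mem_substStr {u : List (T ⊕ g.NT)} {w : List T} (X : g.NT)
    (hw : w ∈ substStr (fσ g) u) :
    g.Derives ((u.map Symbol.terminal).map (backSym g X)) (w.map Symbol.terminal) := by
  induction u generalizing w with
  | nil =>
    have hw' : w = [] := hw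
    subst hw'
    exact Relation.ReflTransGen.refl
  | cons c u ih =>
    obtain ⟨w₁, hw₁, w₂, hw₂, rfl⟩ := Language.mem_mul.mp hw
    have key : g.Derives (backSym g X (Symbol.terminal c) :: (u.map Symbol.terminal).map (backSym g X))
        (w₁.map Symbol.terminal ++ w₂.map Symbol.terminal) := by
      cases c with
      | inl t =>
        have hw1 : w₁ = [t] := hw₁
        subst hw1
        have := (ih hw₂).append_left [Symbol.terminal t]
        simpa [backSym] using this
      | inr Y =>
        have h1 : g.Derives [Symbol.nonterminal Y] (w₁.map Symbol.terminal) := hw₁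
        have h2 := (h1.append_right ((u.map Symbol.terminal).map (backSym g X))).trans
          ((ih hw₂).append_left (w₁.map Symbol.terminal))
        simpa [backSym] using h2
    simpa using key

/-- The hard (⊆) direction, by strong induction on derivation length. -/
lemma main_sub : ∀ n : ℕ, ∀ (X Z : g.NT) (h : SameComp g X Z) (w : List T),
    DerivesIn g [Symbol.nonterminal Z] (w.map Symbol.terminal) n →
    ∃ u : List (T ⊕ g.NT),
      (defSub g X).Derives [Symbol.nonterminal ⟨Z, h⟩] (u.map Symbol.terminal) ∧
      w ∈ substStr (fσ g) u := by
  intro n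
  induction n using Nat.strong_induction_on with
  | _ n ih =>
  intro X Z h w hd
  rcases n with _ | k
  · exfalso
    have heq : [Symbol.nonterminal Z] = w.map Symbol.terminal := hd.zero_eq
    have : Symbol.nonterminal Z ∈ w.map Symbol.terminal := by
      rw [← heq]; simp
    simp at this
  · obtain ⟨v, hp, hd'⟩ := hd.head_cases
    obtain ⟨r, hr, hin, rfl⟩ := produces_single_nt hp
    subst hin
    -- inner claim: list induction
    have claim : ∀ (α : List (Symbol T g.NT)) (w' : List T) (m : ℕ), m < k + 1 →
        DerivesIn g α (w'.map Symbol.terminal) m →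
        ∃ u : List (T ⊕ g.NT),
          (defSub g X).Derives (α.map (convSym g X)) (u.map Symbol.terminal) ∧
          w' ∈ substStr (fσ g) u := by
      intro α
      induction α with
      | nil =>
        intro w' m _ hdm
        have hw' : w' = [] := by
          have h0 := DerivesIn.terminals_eq (β := ([] : List T)) (by simpa using hdm)
          simpa using h0
        subst hw'
        exact ⟨[], Relation.ReflTransGen.refl, by simp [substStr]⟩
      | cons s α ihα =>
        intro w' m hm hdm
        rw [show s :: α = [s] ++ α from rfl] at hdm
        obtain ⟨w₁', w₂', m₁, m₂, hsplit, hd1, hd2, hmm⟩ := hdm.append_split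
        obtain ⟨w₁, w₂, rfl, rfl, rfl⟩ := List.map_eq_append_iff.mp hsplit
        have hm₁ : m₁ < k + 1 := by omega
        have hm₂ : m₂ < k + 1 := by omega
        obtain ⟨u₂, du₂, wu₂⟩ := ihα w₂ m₂ hm₂ hd2
        obtain ⟨u₁, du₁, wu₁⟩ :
            ∃ u₁ : List (T ⊕ g.NT),
              (defSub g X).Derives [convSym g X s] (u₁.map Symbol.terminal) ∧
              w₁ ∈ substStr (fσ g) u₁ := by
          cases s with
          | terminal t =>
            have : w₁.map Symbol.terminal = ([Symbol.terminal t] : List (Symbol T g.NT)) := by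
              have h0 := DerivesIn.terminals_eq (β := [t]) (by simpa using hd1)
              simpa using h0
            have hw1 : w₁ = [t] := by
              cases w₁ with
              | nil => simp at this
              | cons a w₁' =>
                simp only [List.map_cons, List.cons.injEq] at this
                obtain ⟨h1, h2⟩ := this
                injection h1 with h1
                simp [h1, List.map_eq_nil_iff.mp h2]
            subst hw1
            refine ⟨[Sum.inl t], ?_, ?_⟩
            · exact Relation.ReflTransGen.refl
            · rw [substStr_singleton]; rfl
          | nonterminal Y =>
            by_cases hY : SameComp g X Y
            · obtain ⟨u₁, du₁, wu₁⟩ := ih m₁ hm₁ X Y hY w₁ hd1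
              refine ⟨u₁, ?_, wu₁⟩
              have e : convSym g X (Symbol.nonterminal Y) = Symbol.nonterminal ⟨Y, hY⟩ := by
                simp [convSym, hY]
              rw [e]
              exact du₁
            · refine ⟨[Sum.inr Y], ?_, ?_⟩
              · simp only [convSym, dif_neg hY, List.map_cons, List.map_nil]
                exact Relation.ReflTransGen.refl
              · rw [substStr_singleton]
                exact hd1.derives
        refine ⟨u₁ ++ u₂, ?_, ?_⟩
        · have := (du₁.append_right (α.map (convSym g X))).trans
            (du₂.append_left (u₁.map Symbol.terminal))
          rw [List.map_append]
          exact this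
        · rw [substStr_append]
          exact Language.append_mem_mul wu₁ wu₂
    obtain ⟨u, du, wu⟩ := claim r.output w k (by omega) hd'
    refine ⟨u, ?_, wu⟩
    have hrule : (⟨⟨r.input, h⟩, r.output.map (convSym g X)⟩ :
        ContextFreeRule (T ⊕ g.NT) {Y : g.NT // SameComp g X Y}) ∈ (defSub g X).rules :=
      mem_defSub_rules.mpr ⟨r, hr, h, rfl⟩
    have hstep : (defSub g X).Produces [Symbol.nonterminal ⟨r.input, h⟩]
        (r.output.map (convSym g X)) :=
      ⟨_, hrule, ContextFreeRule.Rewrites.input_output⟩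
    exact hstep.trans_derives du

end LRApprox

/-- For a CFG `G` and a nonterminal `X`, the language
`L_G(X)` equals the image of `L(def(X))` under the substitution mapping each
terminal `a ∈ Σ` to `{a}` and each pseudoterminal `Y` to `L_G(Y)`. -/
theorem defsub_substitution {T : Type*} (g : LRApprox.ContextFreeGrammar T) :
    ∀ X : g.NT,
      langFrom g X =
        substLang (Sum.elim (fun a : T => ({[a]} : Language T)) (langFrom g))
          (defSub g X).language := by
  intro X
  ext w
  constructor
  · intro hw
    obtain ⟨n, hn⟩ := derivesIn_of_derives hw
    obtain ⟨u, hu, hwu⟩ := LRApprox.main_sub n X X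
      ⟨Relation.ReflTransGen.refl, Relation.ReflTransGen.refl⟩ w hn
    exact Set.mem_iUnion.mpr ⟨u, Set.mem_iUnion.mpr ⟨hu, hwu⟩⟩
  · intro hw
    obtain ⟨u, hu, hwu⟩ : ∃ u, u ∈ (defSub g X).language ∧
        w ∈ substStr (LRApprox.fσ g) u := by
      obtain ⟨_, ⟨u, rfl⟩, _, ⟨hu, rfl⟩, hwu⟩ := hw
      exact ⟨u, hu, hwu⟩
    have h1 := LRApprox.defSub_derives_back hu
    have h2 := LRApprox.derives_of_mem_substStr (g := g) X hwu
    exact h1.trans h2
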